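/- Let Y be a real random variable, σ̃ > 0, and ζ a centered Gaussian random variable with variance σ̃², independent of Y; let a, b, u ∈ ℝ with |a| < 1, and set X := (1+a)·Y + b + ζ. Let σ ≥ σ̃ and let α > |a·u + b| (so α > 0). Define h⁻ := (u − b − α)/(1+a) and h⁺ := (u − b + α)/(1+a). Then, almost surely, E[(1_{X ≥ u} − 1_{Y ≥ u})² ∣ Y] ≤ Ψ(α/σ)·1_{Y ∉ [h⁻, h⁺]} + 1_{Y ∈ [h⁻, h⁺]}. -/

import Mathlib

open MeasureTheory ProbabilityTheory Real

/-- The upper tail of the standard Gaussian distribution: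
`gaussTail t = P(Z ≥ t)` for `Z` standard normal. -/
noncomputable def gaussTail (t : ℝ) : ℝ :=
  ((gaussianReal 0 1) (Set.Ici t)).toReal

/-- Inequality (10) of the paper: with `X = (1+a)·Y + b + ζ`, `|a| < 1`,
`σ ≥ σ̃`, `α > |a·u + b|`, `h⁻ = (u−b−α)/(1+a)` and `h⁺ = (u−b+α)/(1+a)`,
almost surely
`E[(1_{X ≥ u} − 1_{Y ≥ u})² ∣ Y] ≤ Ψ(α/σ)·1_{Y ∉ [h⁻,h⁺]} + 1_{Y ∈ [h⁻,h⁺]}`. -/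
lemma gauss_scale (σt : ℝ) :
    (gaussianReal 0 1).map (σt * ·) = gaussianReal 0 ⟨σt ^ 2, sq_nonneg σt⟩ := by
  rw [gaussianReal_map_const_mul]
  congr 1
  · ring
  · ext; simp; rfl

lemma gauss_Ici (σt α : ℝ) (hσt : 0 < σt) :
    gaussianReal 0 ⟨σt ^ 2, sq_nonneg σt⟩ (Set.Ici α)
      = gaussianReal 0 1 (Set.Ici (α / σt)) := by
  rw [← gauss_scale σt, Measure.map_apply (measurable_id'.const_mul σt) measurableSet_Ici]
  congr 1
  ext x
  simp only [Set.mem_preimage, Set.mem_Ici]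
  rw [div_le_iff₀ hσt, mul_comm]

lemma gauss_sym (σt α : ℝ) :
    gaussianReal 0 ⟨σt ^ 2, sq_nonneg σt⟩ (Set.Iic (-α))
      = gaussianReal 0 ⟨σt ^ 2, sq_nonneg σt⟩ (Set.Ici α) := by
  have h : (gaussianReal 0 ⟨σt ^ 2, sq_nonneg σt⟩).map ((-1 : ℝ) * ·)
      = gaussianReal 0 ⟨σt ^ 2, sq_nonneg σt⟩ := by
    rw [gaussianReal_map_const_mul (μ := 0) (v := ⟨σt ^ 2, sq_nonneg σt⟩)]
    congr 1
    · ring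
    · ext; simp; exact congrArg _ (one_mul _)
  conv_lhs => rw [← h]
  rw [Measure.map_apply (measurable_id'.const_mul _) measurableSet_Iic]
  congr 1
  ext x
  simp only [Set.mem_preimage, Set.mem_Iic, Set.mem_Ici]
  constructor <;> intro <;> linarith

lemma gauss_tail_bound (σt σ α : ℝ) (hσt : 0 < σt) (hσ : σt ≤ σ) (hα : 0 < α) :
    (gaussianReal 0 ⟨σt ^ 2, sq_nonneg σt⟩ (Set.Ici α)).toReal ≤ gaussTail (α / σ) := by
  rw [gauss_Ici σt α hσt, gaussTail]
  refine ENNReal.toReal_mono (measure_ne_top _ _) (measure_mono ?_)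
  exact Set.Ici_subset_Ici.2 (div_le_div_of_nonneg_left hα.le hσt hσ)


theorem condexp_indicator_diff_sq_bound
    {Ω : Type*} [MeasurableSpace Ω] (P : Measure Ω) [IsProbabilityMeasure P]
    (Y ζ : Ω → ℝ) (hYmeas : Measurable Y) (hζmeas : Measurable ζ)
    (σt : ℝ) (hσt : 0 < σt)
    (hζlaw : Measure.map ζ P = gaussianReal 0 ⟨σt ^ 2, sq_nonneg σt⟩)
    (hindep : IndepFun Y ζ P)
    (a b u : ℝ) (ha : |a| < 1)
    (σ : ℝ) (hσ : σt ≤ σ)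
    (α : ℝ) (hα : |a * u + b| < α) :
    ∀ᵐ ω ∂P,
      (P[(fun ω' =>
          ((if u ≤ (1 + a) * Y ω' + b + ζ ω' then (1 : ℝ) else 0)
            - (if u ≤ Y ω' then (1 : ℝ) else 0)) ^ 2)
        | MeasurableSpace.comap Y inferInstance]) ω
      ≤ gaussTail (α / σ) *
          (if Y ω ∈ Set.Icc ((u - b - α) / (1 + a)) ((u - b + α) / (1 + a))
            then 0 else 1)
        + (if Y ω ∈ Set.Icc ((u - b - α) / (1 + a)) ((u - b + α) / (1 + a))
            then 1 else 0) := by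
  have hm : MeasurableSpace.comap Y inferInstance ≤ ‹MeasurableSpace Ω› := hYmeas.comap_le
  have hXmeas : Measurable fun ω' => (1 + a) * Y ω' + b + ζ ω' :=
    ((hYmeas.const_mul _).add_const b).add hζmeas
  have h1a : (0 : ℝ) < 1 + a := by
    have := abs_lt.1 ha
    linarith [this.1]
  have hαpos : 0 < α := (abs_nonneg _).trans_lt hα
  set hlo : ℝ := (u - b - α) / (1 + a) with hlo_def
  set hhi : ℝ := (u - b + α) / (1 + a) with hhi_def
  have habs := abs_lt.1 hα
  have hlo_mul : hlo * (1 + a) = u - b - α := div_mul_cancel₀ _ h1a.ne'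
  have hhi_mul : hhi * (1 + a) = u - b + α := div_mul_cancel₀ _ h1a.ne'
  have hlo_u : hlo < u := by
    rw [hlo_def, div_lt_iff₀ h1a]; nlinarith [habs.1, habs.2]
  have hu_hi : u < hhi := by
    rw [hhi_def, lt_div_iff₀ h1a]; nlinarith [habs.1, habs.2]
  -- the functions
  set f : Ω → ℝ := fun ω' =>
      ((if u ≤ (1 + a) * Y ω' + b + ζ ω' then (1 : ℝ) else 0)
        - (if u ≤ Y ω' then (1 : ℝ) else 0)) ^ 2 with hf_def
  set g₁ : Ω → ℝ := (Y ⁻¹' Set.Icc hlo hhi).indicator (1 : Ω → ℝ) with hg₁_def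
  set F₂ : Ω → ℝ := (Y ⁻¹' Set.Ioi hhi).indicator (1 : Ω → ℝ) with hF₂_def
  set H₂ : Ω → ℝ := (ζ ⁻¹' Set.Iic (-α)).indicator (1 : Ω → ℝ) with hH₂_def
  set F₃ : Ω → ℝ := (Y ⁻¹' Set.Iio hlo).indicator (1 : Ω → ℝ) with hF₃_def
  set H₃ : Ω → ℝ := (ζ ⁻¹' Set.Ici α).indicator (1 : Ω → ℝ) with hH₃_def
  -- measurability and integrability
  have hfmeas : Measurable f := by
    apply Measurable.pow _ measurable_const
    exact ((measurable_const.ite (measurableSet_le measurable_const hXmeas)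
      measurable_const).sub (measurable_const.ite
      (measurableSet_le measurable_const hYmeas) measurable_const))
  have hfint : Integrable f P := by
    refine Integrable.mono' (integrable_const 1) hfmeas.aestronglyMeasurable
      (Filter.Eventually.of_forall fun ω => ?_)
    simp only [hf_def]
    simp only [Real.norm_eq_abs]
    rw [abs_sq]  -- maybe not; fall back
    split_ifs <;> norm_num
  have hg₁int : Integrable g₁ P :=
    (integrable_const (1:ℝ)).indicator (hYmeas measurableSet_Icc)
  have hg₂int : Integrable (F₂ * H₂) P := by
    rw [hF₂_def, hH₂_def, ← Set.inter_indicator_one]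
    exact (integrable_const (1:ℝ)).indicator
      ((hYmeas measurableSet_Ioi).inter (hζmeas measurableSet_Iic))
  have hg₃int : Integrable (F₃ * H₃) P := by
    rw [hF₃_def, hH₃_def, ← Set.inter_indicator_one]
    exact (integrable_const (1:ℝ)).indicator
      ((hYmeas measurableSet_Iio).inter (hζmeas measurableSet_Ici))
  have hH₂int : Integrable H₂ P :=
    (integrable_const (1:ℝ)).indicator (hζmeas measurableSet_Iic)
  have hH₃int : Integrable H₃ P :=
    (integrable_const (1:ℝ)).indicator (hζmeas measurableSet_Ici)
  -- strong measurability w.r.t. sub-σ-algebras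
  have hg₁sm : StronglyMeasurable[MeasurableSpace.comap Y inferInstance] g₁ :=
    stronglyMeasurable_const.indicator ⟨Set.Icc hlo hhi, measurableSet_Icc, rfl⟩
  have hF₂sm : StronglyMeasurable[MeasurableSpace.comap Y inferInstance] F₂ :=
    stronglyMeasurable_const.indicator ⟨Set.Ioi hhi, measurableSet_Ioi, rfl⟩
  have hF₃sm : StronglyMeasurable[MeasurableSpace.comap Y inferInstance] F₃ :=
    stronglyMeasurable_const.indicator ⟨Set.Iio hlo, measurableSet_Iio, rfl⟩
  have hH₂sm : StronglyMeasurable[MeasurableSpace.comap ζ inferInstance] H₂ :=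
    stronglyMeasurable_const.indicator ⟨Set.Iic (-α), measurableSet_Iic, rfl⟩
  have hH₃sm : StronglyMeasurable[MeasurableSpace.comap ζ inferInstance] H₃ :=
    stronglyMeasurable_const.indicator ⟨Set.Ici α, measurableSet_Ici, rfl⟩
  -- pointwise bound f ≤ g₁ + F₂*H₂ + F₃*H₃
  have hfg : ∀ ω, f ω ≤ g₁ ω + (F₂ * H₂) ω + (F₃ * H₃) ω := by
    intro ω
    have hg₁0 : 0 ≤ g₁ ω := Set.indicator_nonneg (fun _ _ => zero_le_one) _
    have hg₂0 : 0 ≤ (F₂ * H₂) ω :=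
      mul_nonneg (Set.indicator_nonneg (fun _ _ => zero_le_one) _)
        (Set.indicator_nonneg (fun _ _ => zero_le_one) _)
    have hg₃0 : 0 ≤ (F₃ * H₃) ω :=
      mul_nonneg (Set.indicator_nonneg (fun _ _ => zero_le_one) _)
        (Set.indicator_nonneg (fun _ _ => zero_le_one) _)
    by_cases hA : Y ω ∈ Set.Icc hlo hhi
    · have : g₁ ω = 1 := Set.indicator_of_mem (show ω ∈ Y ⁻¹' Set.Icc hlo hhi from hA) 1
      have hle1 : f ω ≤ 1 := by simp only [hf_def]; split_ifs <;> norm_num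
      linarith
    · have hg₁z : g₁ ω = 0 := Set.indicator_of_notMem (show ω ∉ Y ⁻¹' Set.Icc hlo hhi from hA) _
      rw [Set.mem_Icc, not_and_or, not_le, not_le] at hA
      rcases hA with hYlo | hYhi
      · -- Y ω < hlo < u
        have hYu : ¬ u ≤ Y ω := not_le.2 (hYlo.trans hlo_u)
        by_cases hX : u ≤ (1 + a) * Y ω + b + ζ ω
        · -- then ζ ω ≥ α
          have hζα : α ≤ ζ ω := by nlinarith [hYlo, hX, hlo_mul, h1a]
          have hF : F₃ ω = 1 := Set.indicator_of_mem (by simpa using hYlo) _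
          have hH : H₃ ω = 1 := Set.indicator_of_mem (by simpa using hζα) _
          have : f ω = 1 := by simp only [hf_def]; rw [if_pos hX, if_neg hYu]; norm_num
          have : (F₃ * H₃) ω = 1 := by simp [hF, hH]
          linarith
        · have h1' : f ω = 0 := by simp only [hf_def]; rw [if_neg hX, if_neg hYu]; norm_num
          rw [h1']; positivity
      · -- hhi < Y ω, so u < Y ω
        have hYu : u ≤ Y ω := (hu_hi.trans hYhi).le
        by_cases hX : u ≤ (1 + a) * Y ω + b + ζ ω
        · have h1' : f ω = 0 := by simp only [hf_def]; rw [if_pos hX, if_pos hYu]; norm_num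
          rw [h1']; positivity
        · -- then ζ ω ≤ -α
          push_neg at hX
          have hζα : ζ ω ≤ -α := by nlinarith [hYhi, hX, hhi_mul, h1a]
          have hF : F₂ ω = 1 := Set.indicator_of_mem (by simpa using hYhi) _
          have hH : H₂ ω = 1 := Set.indicator_of_mem (by simpa using hζα) _
          have hfv : f ω = 1 := by simp only [hf_def]; rw [if_neg (not_le.2 hX), if_pos hYu]; norm_num
          have h2' : (F₂ * H₂) ω = 1 := by simp [hF, hH]
          rw [hfv, h2']; linarith
  -- conditional expectation computations
  have hmono : P[f|MeasurableSpace.comap Y inferInstance] ≤ᵐ[P] P[g₁ + F₂ * H₂ + F₃ * H₃|MeasurableSpace.comap Y inferInstance] :=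
    condExp_mono hfint ((hg₁int.add hg₂int).add hg₃int)
      (Filter.Eventually.of_forall hfg)
  have hadd : P[g₁ + F₂ * H₂ + F₃ * H₃|MeasurableSpace.comap Y inferInstance]
      =ᵐ[P] P[g₁|MeasurableSpace.comap Y inferInstance] + P[F₂ * H₂|MeasurableSpace.comap Y inferInstance] + P[F₃ * H₃|MeasurableSpace.comap Y inferInstance] := by
    refine (condExp_add (hg₁int.add hg₂int) hg₃int _).trans ?_
    filter_upwards [condExp_add (m := MeasurableSpace.comap Y inferInstance) hg₁int hg₂int] with ω hω
    simp [Pi.add_apply, hω]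
  have hcg₁ : P[g₁|MeasurableSpace.comap Y inferInstance] = g₁ := condExp_of_stronglyMeasurable hm hg₁sm hg₁int
  have hcg₂ : P[F₂ * H₂|MeasurableSpace.comap Y inferInstance] =ᵐ[P] F₂ * P[H₂|MeasurableSpace.comap Y inferInstance] :=
    condExp_mul_of_stronglyMeasurable_left hF₂sm hg₂int hH₂int
  have hcg₃ : P[F₃ * H₃|MeasurableSpace.comap Y inferInstance] =ᵐ[P] F₃ * P[H₃|MeasurableSpace.comap Y inferInstance] :=
    condExp_mul_of_stronglyMeasurable_left hF₃sm hg₃int hH₃int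
  have hcH₂ : P[H₂|MeasurableSpace.comap Y inferInstance] =ᵐ[P] fun _ => ∫ x, H₂ x ∂P :=
    condExp_indep_eq hζmeas.comap_le hm hH₂sm hindep.symm
  have hcH₃ : P[H₃|MeasurableSpace.comap Y inferInstance] =ᵐ[P] fun _ => ∫ x, H₃ x ∂P :=
    condExp_indep_eq hζmeas.comap_le hm hH₃sm hindep.symm
  -- integrals of H₂, H₃
  have hintH₂ : ∫ x, H₂ x ∂P
      = (gaussianReal 0 ⟨σt ^ 2, sq_nonneg σt⟩ (Set.Iic (-α))).toReal := by
    rw [hH₂_def, integral_indicator_one (hζmeas measurableSet_Iic), measureReal_def,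
      ← Measure.map_apply hζmeas measurableSet_Iic, hζlaw]
  have hintH₃ : ∫ x, H₃ x ∂P
      = (gaussianReal 0 ⟨σt ^ 2, sq_nonneg σt⟩ (Set.Ici α)).toReal := by
    rw [hH₃_def, integral_indicator_one (hζmeas measurableSet_Ici), measureReal_def,
      ← Measure.map_apply hζmeas measurableSet_Ici, hζlaw]
  have hp₂ : ∫ x, H₂ x ∂P ≤ gaussTail (α / σ) := by
    rw [hintH₂, gauss_sym]; exact gauss_tail_bound σt σ α hσt hσ hαpos
  have hp₃ : ∫ x, H₃ x ∂P ≤ gaussTail (α / σ) := by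
    rw [hintH₃]; exact gauss_tail_bound σt σ α hσt hσ hαpos
  have hp₂0 : 0 ≤ ∫ x, H₂ x ∂P := by rw [hintH₂]; positivity
  have hp₃0 : 0 ≤ ∫ x, H₃ x ∂P := by rw [hintH₃]; positivity
  -- combine
  filter_upwards [hmono, hadd, hcg₂, hcg₃, hcH₂, hcH₃] with ω h1 h2 h3 h4 h5 h6
  have key : (P[f|MeasurableSpace.comap Y inferInstance]) ω ≤ g₁ ω + F₂ ω * (∫ x, H₂ x ∂P) + F₃ ω * (∫ x, H₃ x ∂P) := by
    calc (P[f|MeasurableSpace.comap Y inferInstance]) ω ≤ (P[g₁ + F₂ * H₂ + F₃ * H₃|MeasurableSpace.comap Y inferInstance]) ω := h1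
    _ = (P[g₁|MeasurableSpace.comap Y inferInstance]) ω + (P[F₂ * H₂|MeasurableSpace.comap Y inferInstance]) ω + (P[F₃ * H₃|MeasurableSpace.comap Y inferInstance]) ω := by rw [h2]; simp
    _ = g₁ ω + F₂ ω * (∫ x, H₂ x ∂P) + F₃ ω * (∫ x, H₃ x ∂P) := by
        rw [hcg₁, h3, h4]; simp [h5, h6]
  refine key.trans ?_
  by_cases hA : Y ω ∈ Set.Icc hlo hhi
  · have hg₁v : g₁ ω = 1 := Set.indicator_of_mem (show ω ∈ Y ⁻¹' Set.Icc hlo hhi from hA) 1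
    have hF₂v : F₂ ω = 0 := Set.indicator_of_notMem (by simp [Set.mem_Icc] at hA; simp; linarith [hA.2]) _
    have hF₃v : F₃ ω = 0 := Set.indicator_of_notMem (by simp [Set.mem_Icc] at hA; simp; linarith [hA.1]) _
    rw [if_pos hA, if_pos hA, hg₁v, hF₂v, hF₃v]
    have : 0 ≤ gaussTail (α / σ) := ENNReal.toReal_nonneg
    linarith
  · have hg₁v : g₁ ω = 0 := Set.indicator_of_notMem (show ω ∉ Y ⁻¹' Set.Icc hlo hhi from hA) _
    rw [if_neg hA, if_neg hA, hg₁v]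
    have hlohi : hlo < hhi := by
      rw [hlo_def, hhi_def]
      rw [div_lt_div_iff₀ h1a h1a]
      nlinarith
    rw [Set.mem_Icc, not_and_or, not_le, not_le] at hA
    rcases hA with hYlo | hYhi
    · have hF₂v : F₂ ω = 0 := Set.indicator_of_notMem (by simp; linarith) _
      have hF₃v : F₃ ω = 1 := Set.indicator_of_mem (by simpa using hYlo) _
      rw [hF₂v, hF₃v]; linarith
    · have hF₂v : F₂ ω = 1 := Set.indicator_of_mem (by simpa using hYhi) _
      have hF₃v : F₃ ω = 0 := Set.indicator_of_notMem (by simp; linarith) _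
      rw [hF₂v, hF₃v]; linarith
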